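/- Let X₁, X₂ be i.i.d. nonnegative random variables with common distribution function F satisfying F(x/θ) + F(x/(1-θ)) ≤ F(x) + 1 for all x ≥ 0 and θ ∈ (0,1). Then for any θ ∈ (0,1), X₁ is stochastically dominated by θX₁ + (1-θ)X₂, i.e. P(θX₁ + (1-θ)X₂ > x) ≥ P(X₁ > x) for all x. -/

import Mathlib

open MeasureTheory ProbabilityTheory Set

/-- If `X₁, X₂` are i.i.d. nonnegative random variables whose common
distribution function `F` satisfies `F (x/θ) + F (x/(1-θ)) ≤ F x + 1` for all `x ≥ 0`
and `θ ∈ (0,1)`, then `X₁ ≤_st θ X₁ + (1-θ) X₂` for any `θ ∈ (0,1)`. -/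
theorem stmt8 {Ω : Type*} [MeasurableSpace Ω] (μ : Measure Ω) [IsProbabilityMeasure μ]
    (X₁ X₂ : Ω → ℝ) (hX₁ : Measurable X₁) (hX₂ : Measurable X₂)
    (hnn₁ : ∀ ω, 0 ≤ X₁ ω) (hnn₂ : ∀ ω, 0 ≤ X₂ ω)
    (hindep : IndepFun X₁ X₂ μ)
    (hid : Measure.map X₁ μ = Measure.map X₂ μ)
    (F : ℝ → ℝ) (hF : ∀ x, F x = (μ {ω | X₁ ω ≤ x}).toReal)
    (hsub : ∀ x θ : ℝ, 0 ≤ x → θ ∈ Ioo (0 : ℝ) 1 →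
      F (x / θ) + F (x / (1 - θ)) ≤ F x + 1)
    (θ : ℝ) (hθ : θ ∈ Ioo (0 : ℝ) 1) :
    ∀ x : ℝ, μ {ω | x < X₁ ω} ≤ μ {ω | x < θ * X₁ ω + (1 - θ) * X₂ ω} := by
  have hθ0 := hθ.1
  have hθ1 := hθ.2
  have h1θ : (0:ℝ) < 1 - θ := by linarith
  intro x
  rcases lt_or_ge x 0 with hx | hx
  · have e1 : {ω | x < X₁ ω} = univ :=
      eq_univ_of_forall fun ω => lt_of_lt_of_le hx (hnn₁ ω)
    have e2 : {ω | x < θ * X₁ ω + (1 - θ) * X₂ ω} = univ :=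
      eq_univ_of_forall fun ω => lt_of_lt_of_le hx
        (add_nonneg (mul_nonneg hθ0.le (hnn₁ ω)) (mul_nonneg h1θ.le (hnn₂ ω)))
    rw [e1, e2]
  · set a := x / θ with ha
    set b := x / (1 - θ) with hb
    have hxa : x ≤ a := by rw [ha, le_div_iff₀ hθ0]; nlinarith
    have hxb : x ≤ b := by rw [hb, le_div_iff₀ h1θ]; nlinarith
    set D : Set Ω := (X₁ ⁻¹' Ioi a) ∪ (X₂ ⁻¹' Ioi b) ∪ (X₁ ⁻¹' Ioi x ∩ X₂ ⁻¹' Ioi x)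
      with hD
    have hDmeas : MeasurableSet D :=
      ((hX₁ measurableSet_Ioi).union (hX₂ measurableSet_Ioi)).union
        ((hX₁ measurableSet_Ioi).inter (hX₂ measurableSet_Ioi))
    have hsubset : D ⊆ {ω | x < θ * X₁ ω + (1 - θ) * X₂ ω} := by
      intro ω hω
      simp only [hD, mem_union, mem_inter_iff, mem_preimage, mem_Ioi] at hω
      rcases hω with ((h | h) | ⟨h1, h2⟩)
      · have h' : x < X₁ ω * θ := (div_lt_iff₀ hθ0).mp h
        have := mul_nonneg h1θ.le (hnn₂ ω)
        simp only [mem_setOf_eq]; nlinarith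
      · have h' : x < X₂ ω * (1 - θ) := (div_lt_iff₀ h1θ).mp h
        have := mul_nonneg hθ0.le (hnn₁ ω)
        simp only [mem_setOf_eq]; nlinarith
      · simp only [mem_setOf_eq]; nlinarith
    have hDc : Dᶜ = (X₁ ⁻¹' Iic a ∩ X₂ ⁻¹' Iic b) \ (X₁ ⁻¹' Ioc x a ∩ X₂ ⁻¹' Ioc x b) := by
      ext ω
      simp only [hD, mem_compl_iff, mem_union, mem_inter_iff, mem_preimage, mem_Ioi,
        mem_Iic, mem_Ioc, mem_diff, not_or]
      constructor
      · rintro ⟨⟨hn1, hn2⟩, hn3⟩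
        refine ⟨⟨not_lt.mp hn1, not_lt.mp hn2⟩, fun hc => hn3 ⟨hc.1.1, hc.2.1⟩⟩
      · rintro ⟨⟨h1', h2'⟩, h3'⟩
        refine ⟨⟨not_lt.mpr h1', not_lt.mpr h2'⟩, fun hc => h3' ⟨⟨hc.1, h1'⟩, hc.2, h2'⟩⟩
    have hTsub : (X₁ ⁻¹' Ioc x a ∩ X₂ ⁻¹' Ioc x b) ⊆ (X₁ ⁻¹' Iic a ∩ X₂ ⁻¹' Iic b) :=
      inter_subset_inter (preimage_mono Ioc_subset_Iic_self)
        (preimage_mono Ioc_subset_Iic_self)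
    have hTmeas : MeasurableSet (X₁ ⁻¹' Ioc x a ∩ X₂ ⁻¹' Ioc x b) :=
      (hX₁ measurableSet_Ioc).inter (hX₂ measurableSet_Ioc)
    have hS : μ (X₁ ⁻¹' Iic a ∩ X₂ ⁻¹' Iic b) = μ (X₁ ⁻¹' Iic a) * μ (X₂ ⁻¹' Iic b) :=
      hindep.measure_inter_preimage_eq_mul _ _ measurableSet_Iic measurableSet_Iic
    have hT : μ (X₁ ⁻¹' Ioc x a ∩ X₂ ⁻¹' Ioc x b) = μ (X₁ ⁻¹' Ioc x a) * μ (X₂ ⁻¹' Ioc x b) :=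
      hindep.measure_inter_preimage_eq_mul _ _ measurableSet_Ioc measurableSet_Ioc
    have hμDc : μ Dᶜ = μ (X₁ ⁻¹' Iic a) * μ (X₂ ⁻¹' Iic b)
        - μ (X₁ ⁻¹' Ioc x a) * μ (X₂ ⁻¹' Ioc x b) := by
      rw [hDc, measure_diff hTsub hTmeas.nullMeasurableSet (measure_ne_top μ _), hS, hT]
    have hmap : ∀ s : Set ℝ, MeasurableSet s → μ (X₂ ⁻¹' s) = μ (X₁ ⁻¹' s) := by
      intro s hs
      rw [← Measure.map_apply hX₂ hs, ← hid, Measure.map_apply hX₁ hs]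
    have hFeq : ∀ y : ℝ, F y = (μ (X₁ ⁻¹' Iic y)).toReal := by
      intro y; rw [hF y]; rfl
    have hIoc : ∀ y : ℝ, x ≤ y → (μ (X₁ ⁻¹' Ioc x y)).toReal = F y - F x := by
      intro y hy
      have he : X₁ ⁻¹' Ioc x y = X₁ ⁻¹' Iic y \ X₁ ⁻¹' Iic x := by
        rw [← preimage_diff, Iic_sdiff_Iic]
      rw [he, measure_diff (preimage_mono (Iic_subset_Iic.mpr hy))
        (hX₁ measurableSet_Iic).nullMeasurableSet (measure_ne_top μ _),
        ENNReal.toReal_sub_of_le (measure_mono (preimage_mono (Iic_subset_Iic.mpr hy)))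
        (measure_ne_top μ _), hFeq, hFeq]
    have hkey : μ Dᶜ ≤ μ (X₁ ⁻¹' Iic x) := by
      rw [← ENNReal.toReal_le_toReal (measure_ne_top μ _) (measure_ne_top μ _), hμDc,
        ENNReal.toReal_sub_of_le (by rw [← hS, ← hT]; exact measure_mono hTsub)
          (ENNReal.mul_ne_top (measure_ne_top μ _) (measure_ne_top μ _)),
        ENNReal.toReal_mul, ENNReal.toReal_mul,
        hmap _ measurableSet_Iic, hmap _ measurableSet_Ioc,
        hIoc a hxa, hIoc b hxb, ← hFeq, ← hFeq, ← hFeq]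
      have hc : 0 ≤ F x := by rw [hF x]; exact ENNReal.toReal_nonneg
      have hs' : F a + F b ≤ F x + 1 := hsub x θ hx ⟨hθ0, hθ1⟩
      nlinarith [mul_nonneg hc (by linarith : (0:ℝ) ≤ F x + 1 - F a - F b)]
    -- convert : μ Dᶜ ≤ μ (X₁ ⁻¹' Ioi x)ᶜ  gives  μ (X₁ ⁻¹' Ioi x) ≤ μ D
    have hcompl : X₁ ⁻¹' Iic x = (X₁ ⁻¹' Ioi x)ᶜ := by
      rw [← preimage_compl, compl_Ioi]
    have h1 : μ D + μ Dᶜ = 1 := by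
      rw [measure_add_measure_compl hDmeas, measure_univ]
    have hfinal : μ (X₁ ⁻¹' Ioi x) ≤ μ D := by
      have h2 : μ (X₁ ⁻¹' Ioi x) + μ (X₁ ⁻¹' Ioi x)ᶜ = 1 := by
        rw [measure_add_measure_compl (hX₁ measurableSet_Ioi), measure_univ]
      have h3 : μ (X₁ ⁻¹' Ioi x) + μ Dᶜ ≤ μ D + μ Dᶜ := by
        calc μ (X₁ ⁻¹' Ioi x) + μ Dᶜ ≤ μ (X₁ ⁻¹' Ioi x) + μ (X₁ ⁻¹' Ioi x)ᶜ :=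
              add_le_add_right (hcompl ▸ hkey) _
          _ = 1 := h2
          _ = μ D + μ Dᶜ := h1.symm
      exact ENNReal.le_of_add_le_add_right (measure_ne_top μ _) h3
    calc μ {ω | x < X₁ ω} = μ (X₁ ⁻¹' Ioi x) := rfl
      _ ≤ μ D := hfinal
      _ ≤ μ {ω | x < θ * X₁ ω + (1 - θ) * X₂ ω} := measure_mono hsubset
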